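/- Let d ≥ 1, δ ≥ 0 and 1 < p⁻ ≤ p⁺ < ∞. There exists a constant c ≥ 1, depending only on d, p⁻, p⁺ and δ, such that for every exponent p ∈ [p⁻, p⁺] and all matrices A, B ∈ ℝ^{d×d}: c⁻¹ |F_p(A) − F_p(B)|² ≤ (S_p(A) − S_p(B)) : (A − B) ≤ c |F_p(A) − F_p(B)|². -/

import Mathlib

set_option maxHeartbeats 1000000


open MeasureTheory
open Real Set

/-- The symmetric part `A^sym := ½(A + Aᵀ)`. -/
noncomputable def msym {d : ℕ} (A : Matrix (Fin d) (Fin d) ℝ) : Matrix (Fin d) (Fin d) ℝ :=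
  (2 : ℝ)⁻¹ • (A + A.transpose)

/-- The Frobenius norm of a matrix. -/
noncomputable def frob {d : ℕ} (A : Matrix (Fin d) (Fin d) ℝ) : ℝ :=
  Real.sqrt (∑ i, ∑ j, (A i j) ^ 2)

/-- The Frobenius inner product `A : B`. -/
noncomputable def finner {d : ℕ} (A B : Matrix (Fin d) (Fin d) ℝ) : ℝ :=
  ∑ i, ∑ j, A i j * B i j

/-- `S_p(A) := (δ+|A^sym|)^{p−2} A^sym`. -/
noncomputable def Smap {d : ℕ} (δ p : ℝ) (A : Matrix (Fin d) (Fin d) ℝ) :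
    Matrix (Fin d) (Fin d) ℝ :=
  ((δ + frob (msym A)) ^ (p - 2)) • msym A

/-- `F_p(A) := (δ+|A^sym|)^{(p−2)/2} A^sym`. -/
noncomputable def Fmap {d : ℕ} (δ p : ℝ) (A : Matrix (Fin d) (Fin d) ℝ) :
    Matrix (Fin d) (Fin d) ℝ :=
  ((δ + frob (msym A)) ^ ((p - 2) / 2)) • msym A

lemma hh_rpow_two {x q : ℝ} (hx : 0 ≤ x) : x ^ (2*q) = (x ^ q)^2 := by
  rcases hx.lt_or_eq with h | h
  · rw [two_mul, Real.rpow_add h, sq]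
  · subst h
    rcases eq_or_ne q 0 with rfl | hq
    · norm_num
    · rw [Real.zero_rpow hq, Real.zero_rpow (by simpa using hq), zero_pow two_ne_zero]

-- ratio bound
lemma hh_ratio {x y e : ℝ} (hx : 0 < x) (hy : 0 < y) (h1 : x ≤ 2*y) (h2 : y ≤ 2*x) :
    x ^ e ≤ 2 ^ |e| * y ^ e := by
  have hxy : x ^ e = (x/y)^e * y^e := by
    rw [Real.div_rpow hx.le hy.le, div_mul_cancel₀]
    exact (Real.rpow_pos_of_pos hy e).ne'
  rw [hxy]
  have hy' : (0:ℝ) < y ^ e := Real.rpow_pos_of_pos hy e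
  have hq : (x/y)^e ≤ 2 ^ |e| := by
    rcases le_or_gt 0 e with he | he
    · rw [abs_of_nonneg he]
      exact Real.rpow_le_rpow (by positivity) (by rw [div_le_iff₀ hy]; linarith) he
    · rw [abs_of_neg he]
      calc (x/y)^e ≤ ((2:ℝ)⁻¹)^e := by
            apply Real.rpow_le_rpow_of_nonpos (by norm_num) _ he.le
            rw [le_div_iff₀ hy]; linarith
        _ = 2 ^ (-e) := by rw [← Real.rpow_neg_one 2, ← Real.rpow_mul (by norm_num)]; ring_nf
  exact mul_le_mul_of_nonneg_right hq hy'.le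

-- derivative of r ↦ (δ+r)^q
lemma hh_hasDerivAt_g (δ q x : ℝ) (hx : 0 < δ + x) :
    HasDerivAt (fun r => (δ+r)^q) (q * (δ+x)^(q-1)) x := by
  have h1 : HasDerivAt (fun r : ℝ => δ + r) 1 x := (hasDerivAt_id x).const_add δ
  have h2 := Real.hasDerivAt_rpow_const (x := δ + x) (p := q) (Or.inl hx.ne')
  simpa [Function.comp_def] using h2.comp x h1

-- derivative of r ↦ r*(δ+r)^e
lemma hh_hasDerivAt_h (δ e x : ℝ) (hx : 0 < δ + x) :
    HasDerivAt (fun r => r*(δ+r)^e) ((δ+x)^(e-1) * (δ+(e+1)*x)) x := by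
  have h := (hasDerivAt_id x).mul (hh_hasDerivAt_g δ e x hx)
  have hre : (δ+x)^e = (δ+x)^(e-1) * (δ+x) := by
    rw [← Real.rpow_add_one hx.ne']; ring_nf
  refine h.congr_deriv ?_
  simp only [id_eq, one_mul, hre]; ring


-- monotonicity of r ↦ r (δ+r)^e for e ≥ -1
lemma hh_mono (δ e s t : ℝ) (hδ : 0 ≤ δ) (he : -1 ≤ e) (hs : 0 ≤ s) (hst : s ≤ t) :
    s*(δ+s)^e ≤ t*(δ+t)^e := by
  rcases le_or_gt 0 e with he0 | he0
  · exact mul_le_mul hst (Real.rpow_le_rpow (by linarith) (by linarith) he0) (by positivity) (by linarith)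
  · rcases hs.lt_or_eq with hs0 | hs0
    · -- 0 < s
      have ht0 : 0 < t := lt_of_lt_of_le hs0 hst
      have hds : 0 < δ + s := by linarith
      have hdt : 0 < δ + t := by linarith
      set α := -e with hα
      have hα0 : 0 < α := by simp [hα]; linarith
      have hα1 : α ≤ 1 := by simp [hα]; linarith
      -- key : s * (δ+t)^α ≤ t * (δ+s)^α
      have key : s * (δ+t)^α ≤ t * (δ+s)^α := by
        have h1 : (s/t) * (δ+t) ≤ δ + s := by
          rw [div_mul_eq_mul_div, div_le_iff₀ ht0]
          nlinarith
        have h2 : ((s/t) * (δ+t))^α ≤ (δ+s)^α :=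
          Real.rpow_le_rpow (by positivity) h1 hα0.le
        have h3 : ((s/t) * (δ+t))^α = (s/t)^α * (δ+t)^α :=
          Real.mul_rpow (by positivity) (by positivity)
        have h4 : s/t ≤ (s/t)^α := by
          have h5 : (s/t) ^ (1:ℝ) ≤ (s/t)^α :=
            Real.rpow_le_rpow_of_exponent_ge (by positivity) (by rw [div_le_one ht0]; linarith) hα1
          simpa using h5
        have h6 : (s/t) * (δ+t)^α ≤ (δ+s)^α := by
          calc (s/t) * (δ+t)^α ≤ (s/t)^α * (δ+t)^α :=
                mul_le_mul_of_nonneg_right h4 (by positivity)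
            _ = ((s/t) * (δ+t))^α := h3.symm
            _ ≤ (δ+s)^α := h2
        calc s * (δ+t)^α = t * ((s/t) * (δ+t)^α) := by field_simp
          _ ≤ t * (δ+s)^α := mul_le_mul_of_nonneg_left h6 ht0.le
      -- convert
      have hes : (δ+s)^e = ((δ+s)^α)⁻¹ := by
        rw [hα]; rw [← Real.rpow_neg hds.le]; ring_nf
      have het : (δ+t)^e = ((δ+t)^α)⁻¹ := by
        rw [hα]; rw [← Real.rpow_neg hdt.le]; ring_nf
      have hA : (0:ℝ) < (δ+s)^α := Real.rpow_pos_of_pos hds α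
      have hB : (0:ℝ) < (δ+t)^α := Real.rpow_pos_of_pos hdt α
      rw [hes, het, show s * ((δ+s)^α)⁻¹ = s/(δ+s)^α from by ring,
        show t * ((δ+t)^α)⁻¹ = t/(δ+t)^α from by ring, div_le_div_iff₀ hA hB]
      linarith [key]
    · rw [← hs0, zero_mul]
      exact mul_nonneg (by linarith) (Real.rpow_nonneg (by linarith) e)

-- contraction: if s ≥ 2t then h_e(t) ≤ 2^(-μ) h_e(s)
lemma hh_contract (δ e μ s t : ℝ) (hδ : 0 ≤ δ) (ht : 0 < t) (hst : 2*t ≤ s)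
    (hμ1 : μ ≤ 1) (hμe : μ ≤ e+1) (hμ0 : 0 < μ) :
    t*(δ+t)^e ≤ 2^(-μ) * (s*(δ+s)^e) := by
  have hs : 0 < s := by linarith
  have hds : 0 < δ + s := by linarith
  have he : -1 ≤ e := by linarith
  have step1 : t*(δ+t)^e ≤ (s/2)*(δ+s/2)^e := hh_mono δ e t (s/2) hδ he ht.le (by linarith)
  have hhe : (0:ℝ) ≤ s*(δ+s)^e := mul_nonneg hs.le (Real.rpow_nonneg hds.le e)
  rcases le_or_gt 0 e with he0 | he0
  · have step2 : (δ+s/2)^e ≤ (δ+s)^e := Real.rpow_le_rpow (by linarith) (by linarith) he0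
    have step3 : (s/2)*(δ+s/2)^e ≤ 2⁻¹ * (s*(δ+s)^e) := by
      have := mul_le_mul_of_nonneg_left step2 (by linarith : (0:ℝ) ≤ s/2)
      calc (s/2)*(δ+s/2)^e ≤ (s/2)*(δ+s)^e := this
        _ = 2⁻¹ * (s*(δ+s)^e) := by ring
    have h2μ : (2:ℝ)⁻¹ ≤ 2^(-μ) := by
      rw [show (2:ℝ)⁻¹ = 2^(-1:ℝ) from by norm_num [Real.rpow_neg_one]]
      exact Real.rpow_le_rpow_of_exponent_le one_le_two (by linarith)
    calc t*(δ+t)^e ≤ 2⁻¹ * (s*(δ+s)^e) := le_trans step1 step3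
      _ ≤ 2^(-μ) * (s*(δ+s)^e) := mul_le_mul_of_nonneg_right h2μ hhe
  · -- e < 0
    have step2 : (δ+s/2)^e ≤ ((δ+s)/2)^e :=
      Real.rpow_le_rpow_of_nonpos (by linarith) (by linarith) he0.le
    have step3 : ((δ+s)/2)^e = (δ+s)^e * 2^(-e) := by
      rw [Real.div_rpow hds.le (by norm_num), Real.rpow_neg (by norm_num), div_eq_mul_inv]
    have step4 : (s/2)*(δ+s/2)^e ≤ 2^(-e-1) * (s*(δ+s)^e) := by
      have h1 : (s/2)*(δ+s/2)^e ≤ (s/2)*((δ+s)^e * 2^(-e)) := by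
        rw [← step3]
        exact mul_le_mul_of_nonneg_left step2 (by linarith)
      calc (s/2)*(δ+s/2)^e ≤ (s/2)*((δ+s)^e * 2^(-e)) := h1
        _ = (2^(-e) * 2⁻¹) * (s*(δ+s)^e) := by ring
        _ = 2^(-e-1) * (s*(δ+s)^e) := by
            rw [show (2:ℝ)⁻¹ = 2^(-1:ℝ) from by norm_num [Real.rpow_neg_one],
              ← Real.rpow_add (by norm_num)]
            ring_nf
    have h2μ : (2:ℝ)^(-e-1) ≤ 2^(-μ) := by
      exact Real.rpow_le_rpow_of_exponent_le one_le_two (by linarith)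
    calc t*(δ+t)^e ≤ 2^(-e-1) * (s*(δ+s)^e) := le_trans step1 step4
      _ ≤ 2^(-μ) * (s*(δ+s)^e) := mul_le_mul_of_nonneg_right h2μ hhe


lemma hh_slope_g (δ q s t : ℝ) (hdt : 0 < δ + t) (hts : t < s) :
    ∃ ξ ∈ Ioo t s, (δ+s)^q - (δ+t)^q = q*(δ+ξ)^(q-1) * (s-t) := by
  have hcont : ContinuousOn (fun r => (δ+r)^q) (Icc t s) := fun x hx =>
    ((hh_hasDerivAt_g δ q x (by have := hx.1; linarith)).continuousAt).continuousWithinAt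
  obtain ⟨ξ, hξ, hslope⟩ := exists_hasDerivAt_eq_slope (fun r => (δ+r)^q)
    (fun x => q*(δ+x)^(q-1)) hts hcont
    (fun x hx => hh_hasDerivAt_g δ q x (by have := hx.1; linarith))
  refine ⟨ξ, hξ, ?_⟩
  have hst : s - t ≠ 0 := by linarith
  field_simp at hslope
  linarith [hslope]

lemma hh_slope_h (δ e s t : ℝ) (hdt : 0 < δ + t) (hts : t < s) :
    ∃ ξ ∈ Ioo t s, s*(δ+s)^e - t*(δ+t)^e = (δ+ξ)^(e-1)*(δ+(e+1)*ξ) * (s-t) := by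
  have hcont : ContinuousOn (fun r => r*(δ+r)^e) (Icc t s) := fun x hx =>
    ((hh_hasDerivAt_h δ e x (by have := hx.1; linarith)).continuousAt).continuousWithinAt
  obtain ⟨ξ, hξ, hslope⟩ := exists_hasDerivAt_eq_slope (fun r => r*(δ+r)^e)
    (fun x => (δ+x)^(e-1)*(δ+(e+1)*x)) hts hcont
    (fun x hx => hh_hasDerivAt_h δ e x (by have := hx.1; linarith))
  refine ⟨ξ, hξ, ?_⟩
  have hst : s - t ≠ 0 := by linarith
  field_simp at hslope
  linarith [hslope]


lemma hh_parts {a x y u v : ℝ} (ha : 0 ≤ a) (hx : 0 ≤ x) (hy : 0 ≤ y) (hu : 0 ≤ u) (hv : 0 ≤ v) :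
    a*x ≤ a*(x+y)+u+v ∧ a*y ≤ a*(x+y)+u+v ∧ u ≤ a*(x+y)+u+v ∧ v ≤ a*(x+y)+u+v := by
  have h1 := mul_nonneg ha hx
  have h2 := mul_nonneg ha hy
  have h3 : a*(x+y) = a*x + a*y := mul_add a x y
  exact ⟨by linarith, by linarith, by linarith, by linarith⟩

lemma hh_quad (δ q qlo η : ℝ) (hδ : 0 ≤ δ) (hη : 0 < η) (h1 : 0 < 2*qlo+1) (h2 : 2*qlo+1 ≤ 2*q+1) :
    (2*qlo+1) * η^2 ≤ (δ+η)*(δ+(2*q+1)*η) := by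
  nlinarith [sq_nonneg δ, mul_nonneg hδ hη.le,
    mul_nonneg (mul_nonneg hδ hη.le) (by linarith : (0:ℝ) ≤ 2*q+1),
    mul_nonneg (by linarith : (0:ℝ) ≤ 2*q+1-(2*qlo+1)) (sq_nonneg η)]

lemma hh_quad2 (δ q qlo ζ : ℝ) (hδ : 0 ≤ δ) (hζ : 0 < ζ) (h1 : 0 < qlo+1) (h2 : qlo+1 ≤ q+1) :
    (qlo+1)^2 * ζ^2 ≤ (δ+(q+1)*ζ)^2 := by
  have key : (qlo+1)*ζ ≤ δ+(q+1)*ζ := by nlinarith [mul_nonneg (by linarith : (0:ℝ) ≤ q+1-(qlo+1)) hζ.le]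
  have h0 : 0 ≤ (qlo+1)*ζ := by positivity
  calc (qlo+1)^2 * ζ^2 = ((qlo+1)*ζ)^2 := by ring
    _ ≤ (δ+(q+1)*ζ)^2 := pow_le_pow_left₀ h0 key 2

lemma hh_st2 (s t η : ℝ) (ht0 : 0 < t) (hnear : s ≤ 2*t) (hη1 : t < η) : s*t ≤ 2*η^2 := by
  nlinarith

lemma hh_sqdiff (a b : ℝ) (h0 : 0 ≤ b) (h1 : b ≤ a) : (a-b)^2 ≤ a^2 := by nlinarith

lemma hh_lin1 (κ X Y : ℝ) (h : Y ≤ κ*X) : (1-κ)*X ≤ X - Y := by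
  have : (1-κ)*X = X - κ*X := by ring
  linarith
open Real Set

noncomputable def hhB (qlo qhi : ℝ) : ℝ := |qlo| + |qhi| + 1
noncomputable def hhK (qlo : ℝ) : ℝ := 2^(-(min 1 (qlo+1/2)))
noncomputable def hhC (qlo qhi : ℝ) : ℝ :=
  2^(2*hhB qlo qhi+2) * (2*(hhB qlo qhi)^2) * ((2*qlo+1)⁻¹ + ((qlo+1)^2)⁻¹)
  + 2/(1-hhK qlo) + ((1-hhK qlo)⁻¹)^2

lemma hhK_lt_one (qlo : ℝ) (hqlo : -(1/2) < qlo) : hhK qlo < 1 := by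
  have hμ : 0 < min 1 (qlo+1/2) := lt_min one_pos (by linarith)
  have : (2:ℝ)^(-(min 1 (qlo+1/2))) < 2^(0:ℝ) :=
    Real.rpow_lt_rpow_of_exponent_lt one_lt_two (by linarith)
  simpa [hhK] using this

lemma hhK_pos (qlo : ℝ) : 0 < hhK qlo := Real.rpow_pos_of_pos two_pos _

lemma hhB_pos (qlo qhi : ℝ) : 0 < hhB qlo qhi := by
  have := abs_nonneg qlo; have := abs_nonneg qhi; unfold hhB; linarith

lemma hhC_nonneg (qlo qhi : ℝ) (hqlo : -(1/2) < qlo) : 0 ≤ hhC qlo qhi := by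
  have h1 := hhK_lt_one qlo hqlo
  have hB := hhB_pos qlo qhi
  have h2 : (0:ℝ) < 2^(2*hhB qlo qhi+2) := Real.rpow_pos_of_pos two_pos _
  have h3 : (0:ℝ) ≤ (2*qlo+1)⁻¹ := inv_nonneg.2 (by linarith)
  have h4 : (0:ℝ) ≤ ((qlo+1)^2)⁻¹ := by positivity
  have h5 : (0:ℝ) ≤ 2/(1-hhK qlo) := div_nonneg (by norm_num) (by linarith)
  have h6 : (0:ℝ) ≤ ((1-hhK qlo)⁻¹)^2 := by positivity
  unfold hhC
  have : (0:ℝ) ≤ 2^(2*hhB qlo qhi+2) * (2*(hhB qlo qhi)^2) * ((2*qlo+1)⁻¹ + ((qlo+1)^2)⁻¹) := by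
    have : (0:ℝ) ≤ 2*qlo+1 := by linarith
    positivity
  linarith

lemma hh_claims (qlo qhi δ q s t : ℝ) (hqlo : -(1/2) < qlo) (hq1 : qlo ≤ q) (hq2 : q ≤ qhi)
    (hδ : 0 ≤ δ) (ht : 0 ≤ t) (hts : t ≤ s) :
    ((δ+s)^q - (δ+t)^q)^2 * (s*t) ≤
        hhC qlo qhi * ((s-t) * (s*(δ+s)^(2*q) - t*(δ+t)^(2*q)))
    ∧ ((δ+s)^q - (δ+t)^q)^2 * (s*t) ≤ hhC qlo qhi * (s*(δ+s)^q - t*(δ+t)^q)^2 := by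
  have hq0 : -(1/2) < q := lt_of_lt_of_le hqlo hq1
  have hC0 := hhC_nonneg qlo qhi hqlo
  have hRA : 0 ≤ (s-t) * (s*(δ+s)^(2*q) - t*(δ+t)^(2*q)) := by
    have h := hh_mono δ (2*q) t s hδ (by linarith) ht hts
    exact mul_nonneg (by linarith) (by linarith)
  have hRB : 0 ≤ (s*(δ+s)^q - t*(δ+t)^q)^2 := sq_nonneg _
  -- trivial cases
  rcases eq_or_lt_of_le ht with ht0 | ht0
  · have hL0 : ((δ+s)^q - (δ+t)^q)^2 * (s*t) = 0 := by rw [← ht0]; ring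
    rw [hL0]
    exact ⟨mul_nonneg hC0 hRA, mul_nonneg hC0 hRB⟩
  rcases eq_or_lt_of_le hts with hst0 | hst0
  · have hL0 : ((δ+s)^q - (δ+t)^q)^2 * (s*t) = 0 := by rw [hst0]; ring
    rw [hL0]
    exact ⟨mul_nonneg hC0 hRA, mul_nonneg hC0 hRB⟩
  -- now 0 < t < s
  have hs0 : 0 < s := lt_trans ht0 hst0
  have hdt : 0 < δ + t := by linarith
  have hds : 0 < δ + s := by linarith
  set B := hhB qlo qhi with hB
  have hBpos := hhB_pos qlo qhi
  have hqB : |q| ≤ B := by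
    rw [hB, hhB, abs_le]
    rcases abs_le.1 (le_refl |qlo|) with ⟨h1, h2⟩
    rcases abs_le.1 (le_refl |qhi|) with ⟨h3, h4⟩
    constructor <;> nlinarith
  have hq2lo : 0 < 2*qlo+1 := by linarith
  have hq2q : 2*qlo+1 ≤ 2*q+1 := by linarith
  have hqlo1 : (1:ℝ)/2 < qlo+1 := by linarith
  rcases le_or_gt s (2*t) with hnear | hfar
  · -- NEAR CASE
    obtain ⟨ξ, hξ, hgξ⟩ := hh_slope_g δ q s t hdt hst0
    obtain ⟨η, hη, hhη⟩ := hh_slope_h δ (2*q) s t hdt hst0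
    obtain ⟨ζ, hζ, hhζ⟩ := hh_slope_h δ q s t hdt hst0
    have hξ1 := hξ.1; have hξ2 := hξ.2
    have hη1 := hη.1; have hη2 := hη.2
    have hζ1 := hζ.1; have hζ2 := hζ.2
    have hdξ : 0 < δ + ξ := by linarith
    have hdη : 0 < δ + η := by linarith
    have hdζ : 0 < δ + ζ := by linarith
    -- ratio bounds
    have hratξη : (δ+ξ)^(2*q-2) ≤ 2^(2*B+2) * (δ+η)^(2*q-2) := by
      have h1 := hh_ratio (e := 2*q-2) hdξ hdη (by linarith) (by linarith)
      have h2 : (2:ℝ)^|2*q-2| ≤ 2^(2*B+2) := by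
        apply Real.rpow_le_rpow_of_exponent_le one_le_two
        rcases abs_le.1 hqB with ⟨hh1, hh2⟩
        rcases abs_cases (2*q-2) with ⟨h,_⟩ | ⟨h,_⟩ <;> rw [h] <;> linarith
      calc (δ+ξ)^(2*q-2) ≤ 2^|2*q-2| * (δ+η)^(2*q-2) := h1
        _ ≤ 2^(2*B+2) * (δ+η)^(2*q-2) :=
            mul_le_mul_of_nonneg_right h2 (Real.rpow_nonneg hdη.le _)
    have hratξζ : (δ+ξ)^(2*q-2) ≤ 2^(2*B+2) * (δ+ζ)^(2*q-2) := by
      have h1 := hh_ratio (e := 2*q-2) hdξ hdζ (by linarith) (by linarith)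
      have h2 : (2:ℝ)^|2*q-2| ≤ 2^(2*B+2) := by
        apply Real.rpow_le_rpow_of_exponent_le one_le_two
        rcases abs_le.1 hqB with ⟨hh1, hh2⟩
        rcases abs_cases (2*q-2) with ⟨h,_⟩ | ⟨h,_⟩ <;> rw [h] <;> linarith
      calc (δ+ξ)^(2*q-2) ≤ 2^|2*q-2| * (δ+ζ)^(2*q-2) := h1
        _ ≤ 2^(2*B+2) * (δ+ζ)^(2*q-2) :=
            mul_le_mul_of_nonneg_right h2 (Real.rpow_nonneg hdζ.le _)
    -- G^2 expression
    have hG2 : ((δ+s)^q - (δ+t)^q)^2 = q^2 * (δ+ξ)^(2*q-2) * (s-t)^2 := by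
      have h2 : ((δ+ξ)^(q-1))^2 = (δ+ξ)^(2*q-2) := by
        rw [← hh_rpow_two hdξ.le]; ring_nf
      rw [hgξ, mul_pow, mul_pow, h2]
    have hqB2 : q^2 ≤ B^2 := by rcases abs_le.1 hqB with ⟨h1, h2⟩; exact sq_le_sq' h1 h2
    have h2B0 : (0:ℝ) < 2^(2*B+2) := Real.rpow_pos_of_pos two_pos _
    set CAn := 2^(2*B+2) * (2*B^2) * (2*qlo+1)⁻¹ with hCAn
    set CBn := 2^(2*B+2) * (2*B^2) * ((qlo+1)^2)⁻¹ with hCBn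
    have hCAn0 : 0 ≤ CAn := by
      apply mul_nonneg (by positivity) (inv_nonneg.2 (by linarith))
    have hCBn0 : 0 ≤ CBn := by positivity
    have hCbig : CAn ≤ hhC qlo qhi ∧ CBn ≤ hhC qlo qhi := by
      have hk1 := hhK_lt_one qlo hqlo
      have hp := hh_parts (a := 2^(2*B+2) * (2*B^2)) (x := (2*qlo+1)⁻¹)
        (y := ((qlo+1)^2)⁻¹) (u := 2/(1-hhK qlo)) (v := ((1-hhK qlo)⁻¹)^2)
        (by positivity) (inv_nonneg.2 (by linarith)) (by positivity)
        (div_nonneg (by norm_num) (by linarith)) (sq_nonneg _)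
      rw [hCAn, hCBn]
      unfold hhC
      rw [← hB]
      exact ⟨hp.1, hp.2.1⟩
    constructor
    · -- CLAIM A near
      rw [hhη, hG2]
      have hsplit : (δ+η)^(2*q-1) = (δ+η)^(2*q-2)*(δ+η) := by
        rw [show (2*q-1 : ℝ) = (2*q-2)+1 from by ring, Real.rpow_add_one hdη.ne']
      have hP : (0:ℝ) < (δ+η)^(2*q-2) := Real.rpow_pos_of_pos hdη _
      have hst2 : s*t ≤ 2*η^2 := hh_st2 s t η ht0 hnear hη1
      have f2 : q^2*(s*t) ≤ B^2*(2*η^2) :=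
        mul_le_mul hqB2 hst2 (by positivity) (by positivity)
      have hDη : (2*qlo+1) * η^2 ≤ (δ+η)*(δ+(2*q+1)*η) :=
        hh_quad δ q qlo η hδ (by linarith) hq2lo hq2q
      have key : q^2*(δ+ξ)^(2*q-2)*(s*t) ≤ CAn * ((δ+η)^(2*q-1)*(δ+(2*q+1)*η)) := by
        calc q^2*(δ+ξ)^(2*q-2)*(s*t) = (q^2*(s*t)) * (δ+ξ)^(2*q-2) := by ring
          _ ≤ (q^2*(s*t)) * (2^(2*B+2) * (δ+η)^(2*q-2)) :=
              mul_le_mul_of_nonneg_left hratξη (by positivity)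
          _ = (q^2*(s*t)) * 2^(2*B+2) * (δ+η)^(2*q-2) := by ring
          _ ≤ (B^2*(2*η^2)) * 2^(2*B+2) * (δ+η)^(2*q-2) := by
              apply mul_le_mul_of_nonneg_right _ hP.le
              exact mul_le_mul_of_nonneg_right f2 h2B0.le
          _ = CAn * ((2*qlo+1)*η^2) * (δ+η)^(2*q-2) := by
              rw [hCAn]; field_simp
          _ ≤ CAn * ((δ+η)*(δ+(2*q+1)*η)) * (δ+η)^(2*q-2) :=
              mul_le_mul_of_nonneg_right (mul_le_mul_of_nonneg_left hDη hCAn0) hP.le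
          _ = CAn * ((δ+η)^(2*q-1)*(δ+(2*q+1)*η)) := by rw [hsplit]; ring
      have h6 : (0:ℝ) ≤ (δ+η)^(2*q-1)*(δ+(2*q+1)*η) := by
        apply mul_nonneg (Real.rpow_nonneg hdη.le _)
        have : (0:ℝ) ≤ (2*q+1)*η := mul_nonneg (by linarith) (by linarith)
        linarith
      calc q^2*(δ+ξ)^(2*q-2)*(s-t)^2*(s*t)
          = (q^2*(δ+ξ)^(2*q-2)*(s*t)) * (s-t)^2 := by ring
        _ ≤ (CAn * ((δ+η)^(2*q-1)*(δ+(2*q+1)*η))) * (s-t)^2 :=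
            mul_le_mul_of_nonneg_right key (sq_nonneg _)
        _ ≤ (hhC qlo qhi * ((δ+η)^(2*q-1)*(δ+(2*q+1)*η))) * (s-t)^2 := by
            apply mul_le_mul_of_nonneg_right _ (sq_nonneg _)
            exact mul_le_mul_of_nonneg_right hCbig.1 h6
        _ = hhC qlo qhi * ((s-t)*((δ+η)^(2*q-1)*(δ+(2*q+1)*η)*(s-t))) := by ring
    · -- CLAIM B near
      rw [hhζ, hG2]
      have h2ζ : ((δ+ζ)^(q-1))^2 = (δ+ζ)^(2*q-2) := by
        rw [← hh_rpow_two hdζ.le]; ring_nf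
      have hP : (0:ℝ) < (δ+ζ)^(2*q-2) := Real.rpow_pos_of_pos hdζ _
      have hst2 : s*t ≤ 2*ζ^2 := hh_st2 s t ζ ht0 hnear hζ1
      have f2 : q^2*(s*t) ≤ B^2*(2*ζ^2) :=
        mul_le_mul hqB2 hst2 (by positivity) (by positivity)
      have hDζ : (qlo+1)^2 * ζ^2 ≤ (δ+(q+1)*ζ)^2 :=
        hh_quad2 δ q qlo ζ hδ (by linarith) (by linarith) (by linarith)
      have key : q^2*(δ+ξ)^(2*q-2)*(s*t) ≤ CBn * ((δ+ζ)^(2*q-2)*(δ+(q+1)*ζ)^2) := by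
        calc q^2*(δ+ξ)^(2*q-2)*(s*t) = (q^2*(s*t)) * (δ+ξ)^(2*q-2) := by ring
          _ ≤ (q^2*(s*t)) * (2^(2*B+2) * (δ+ζ)^(2*q-2)) :=
              mul_le_mul_of_nonneg_left hratξζ (by positivity)
          _ = (q^2*(s*t)) * 2^(2*B+2) * (δ+ζ)^(2*q-2) := by ring
          _ ≤ (B^2*(2*ζ^2)) * 2^(2*B+2) * (δ+ζ)^(2*q-2) := by
              apply mul_le_mul_of_nonneg_right _ hP.le
              exact mul_le_mul_of_nonneg_right f2 h2B0.le
          _ = CBn * ((qlo+1)^2*ζ^2) * (δ+ζ)^(2*q-2) := by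
              rw [hCBn]; field_simp
          _ ≤ CBn * ((δ+(q+1)*ζ)^2) * (δ+ζ)^(2*q-2) :=
              mul_le_mul_of_nonneg_right (mul_le_mul_of_nonneg_left hDζ hCBn0) hP.le
          _ = CBn * ((δ+ζ)^(2*q-2)*(δ+(q+1)*ζ)^2) := by ring
      have h6 : (0:ℝ) ≤ (δ+ζ)^(2*q-2)*(δ+(q+1)*ζ)^2 :=
        mul_nonneg (Real.rpow_nonneg hdζ.le _) (sq_nonneg _)
      calc q^2*(δ+ξ)^(2*q-2)*(s-t)^2*(s*t)
          = (q^2*(δ+ξ)^(2*q-2)*(s*t)) * (s-t)^2 := by ring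
        _ ≤ (CBn * ((δ+ζ)^(2*q-2)*(δ+(q+1)*ζ)^2)) * (s-t)^2 :=
            mul_le_mul_of_nonneg_right key (sq_nonneg _)
        _ ≤ (hhC qlo qhi * ((δ+ζ)^(2*q-2)*(δ+(q+1)*ζ)^2)) * (s-t)^2 := by
            apply mul_le_mul_of_nonneg_right _ (sq_nonneg _)
            exact mul_le_mul_of_nonneg_right hCbig.2 h6
        _ = hhC qlo qhi * ((δ+ζ)^(q-1)*(δ+(q+1)*ζ)*(s-t))^2 := by
            rw [mul_pow, mul_pow, h2ζ]; ring
  · -- FAR CASE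
    have hk1 := hhK_lt_one qlo hqlo
    have hk0 := hhK_pos qlo
    have hμ0 : 0 < min 1 (qlo+1/2) := lt_min one_pos (by linarith)
    have hμ1 : min 1 (qlo+1/2) ≤ 1 := min_le_left _ _
    have hμq : min 1 (qlo+1/2) ≤ qlo + 1/2 := min_le_right _ _
    have hcon2q : t*(δ+t)^(2*q) ≤ hhK qlo * (s*(δ+s)^(2*q)) :=
      hh_contract δ (2*q) (min 1 (qlo+1/2)) s t hδ ht0 hfar.le hμ1 (by linarith) hμ0
    have hconq : t*(δ+t)^q ≤ hhK qlo * (s*(δ+s)^q) :=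
      hh_contract δ q (min 1 (qlo+1/2)) s t hδ ht0 hfar.le hμ1 (by linarith) hμ0
    have hh1s : (0:ℝ) ≤ s*(δ+s)^(2*q) := mul_nonneg hs0.le (Real.rpow_nonneg hds.le _)
    have hh2s : (0:ℝ) ≤ s*(δ+s)^q := mul_nonneg hs0.le (Real.rpow_nonneg hds.le _)
    have hsq2 : ((δ+s)^q)^2 = (δ+s)^(2*q) := (hh_rpow_two hds.le).symm
    have htq2 : ((δ+t)^q)^2 = (δ+t)^(2*q) := (hh_rpow_two hdt.le).symm
    -- LHS ≤ Z := s^2 (δ+s)^(2q)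
    have hLZ : ((δ+s)^q - (δ+t)^q)^2*(s*t) ≤ s^2*(δ+s)^(2*q) := by
      rcases le_or_gt 0 q with hq | hq
      · have hm : (δ+t)^q ≤ (δ+s)^q := Real.rpow_le_rpow hdt.le (by linarith) hq
        have h0t : (0:ℝ) ≤ (δ+t)^q := Real.rpow_nonneg hdt.le _
        have hGb : ((δ+s)^q - (δ+t)^q)^2 ≤ (δ+s)^(2*q) := by
          rw [← hsq2]; exact hh_sqdiff _ _ h0t hm
        calc ((δ+s)^q - (δ+t)^q)^2*(s*t) ≤ (δ+s)^(2*q)*(s*t) :=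
              mul_le_mul_of_nonneg_right hGb (by positivity)
          _ ≤ (δ+s)^(2*q)*(s*s) := by
              apply mul_le_mul_of_nonneg_left _ (Real.rpow_nonneg hds.le _)
              exact mul_le_mul_of_nonneg_left hts hs0.le
          _ = s^2*(δ+s)^(2*q) := by ring
      · have hm : (δ+s)^q ≤ (δ+t)^q :=
          Real.rpow_le_rpow_of_nonpos hdt (by linarith) hq.le
        have h0s' : (0:ℝ) ≤ (δ+s)^q := Real.rpow_nonneg hds.le _
        have hGb : ((δ+s)^q - (δ+t)^q)^2 ≤ (δ+t)^(2*q) := by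
          rw [← htq2, show ((δ+s)^q - (δ+t)^q)^2 = ((δ+t)^q - (δ+s)^q)^2 from by ring]
          exact hh_sqdiff _ _ h0s' hm
        calc ((δ+s)^q - (δ+t)^q)^2*(s*t) ≤ (δ+t)^(2*q)*(s*t) :=
              mul_le_mul_of_nonneg_right hGb (by positivity)
          _ = s*(t*(δ+t)^(2*q)) := by ring
          _ ≤ s*(hhK qlo * (s*(δ+s)^(2*q))) :=
              mul_le_mul_of_nonneg_left hcon2q hs0.le
          _ ≤ s*(1 * (s*(δ+s)^(2*q))) := by
              apply mul_le_mul_of_nonneg_left _ hs0.le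
              exact mul_le_mul_of_nonneg_right (by linarith) hh1s
          _ = s^2*(δ+s)^(2*q) := by ring
    constructor
    · -- CLAIM A far
      have h1 : (1-hhK qlo)*(s*(δ+s)^(2*q)) ≤ s*(δ+s)^(2*q) - t*(δ+t)^(2*q) :=
        hh_lin1 _ _ _ hcon2q
      have h2 : s/2 ≤ s - t := by linarith
      have h3 : (0:ℝ) ≤ (1-hhK qlo)*(s*(δ+s)^(2*q)) := mul_nonneg (by linarith) hh1s
      have hRlow : (s/2)*((1-hhK qlo)*(s*(δ+s)^(2*q))) ≤
          (s-t)*(s*(δ+s)^(2*q) - t*(δ+t)^(2*q)) :=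
        mul_le_mul h2 h1 h3 (by linarith)
      have hCf : 2/(1-hhK qlo) ≤ hhC qlo qhi := by
        have hp := hh_parts (a := 2^(2*B+2) * (2*B^2)) (x := (2*qlo+1)⁻¹)
          (y := ((qlo+1)^2)⁻¹) (u := 2/(1-hhK qlo)) (v := ((1-hhK qlo)⁻¹)^2)
          (by positivity) (inv_nonneg.2 (by linarith)) (by positivity)
          (div_nonneg (by norm_num) (by linarith)) (sq_nonneg _)
        unfold hhC; rw [← hB]; exact hp.2.2.1
      calc ((δ+s)^q - (δ+t)^q)^2*(s*t) ≤ s^2*(δ+s)^(2*q) := hLZ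
        _ = (2/(1-hhK qlo)) * ((s/2)*((1-hhK qlo)*(s*(δ+s)^(2*q)))) := by
            have hne : (1:ℝ)-hhK qlo ≠ 0 := by linarith
            field_simp
        _ ≤ (2/(1-hhK qlo)) * ((s-t)*(s*(δ+s)^(2*q) - t*(δ+t)^(2*q))) := by
            apply mul_le_mul_of_nonneg_left hRlow
            exact div_nonneg (by norm_num) (by linarith)
        _ ≤ hhC qlo qhi * ((s-t)*(s*(δ+s)^(2*q) - t*(δ+t)^(2*q))) :=
            mul_le_mul_of_nonneg_right hCf hRA
    · -- CLAIM B far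
      have h1 : (1-hhK qlo)*(s*(δ+s)^q) ≤ s*(δ+s)^q - t*(δ+t)^q :=
        hh_lin1 _ _ _ hconq
      have h3 : (0:ℝ) ≤ (1-hhK qlo)*(s*(δ+s)^q) := mul_nonneg (by linarith) hh2s
      have hsqle : ((1-hhK qlo)*(s*(δ+s)^q))^2 ≤ (s*(δ+s)^q - t*(δ+t)^q)^2 :=
        pow_le_pow_left₀ h3 h1 2
      have hCf : ((1-hhK qlo)⁻¹)^2 ≤ hhC qlo qhi := by
        have hp := hh_parts (a := 2^(2*B+2) * (2*B^2)) (x := (2*qlo+1)⁻¹)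
          (y := ((qlo+1)^2)⁻¹) (u := 2/(1-hhK qlo)) (v := ((1-hhK qlo)⁻¹)^2)
          (by positivity) (inv_nonneg.2 (by linarith)) (by positivity)
          (div_nonneg (by norm_num) (by linarith)) (sq_nonneg _)
        unfold hhC; rw [← hB]; exact hp.2.2.2
      calc ((δ+s)^q - (δ+t)^q)^2*(s*t) ≤ s^2*(δ+s)^(2*q) := hLZ
        _ = ((1-hhK qlo)⁻¹)^2 * (((1-hhK qlo)*(s*(δ+s)^q))^2) := by
            have hne : (1:ℝ)-hhK qlo ≠ 0 := by linarith
            rw [← hsq2]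
            field_simp
        _ ≤ ((1-hhK qlo)⁻¹)^2 * ((s*(δ+s)^q - t*(δ+t)^q)^2) :=
            mul_le_mul_of_nonneg_left hsqle (sq_nonneg _)
        _ ≤ hhC qlo qhi * (s*(δ+s)^q - t*(δ+t)^q)^2 :=
            mul_le_mul_of_nonneg_right hCf hRB


lemma hh_main (qlo qhi δ q s t w : ℝ) (hqlo : -(1/2) < qlo) (hq1 : qlo ≤ q) (hq2 : q ≤ qhi)
    (hδ : 0 ≤ δ) (hs : 0 ≤ s) (ht : 0 ≤ t) (hw : |w| ≤ s*t) :
    (1+hhC qlo qhi)⁻¹ *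
        (((δ+s)^q)^2*s^2 + ((δ+t)^q)^2*t^2 - 2*((δ+s)^q*(δ+t)^q)*w) ≤
      (δ+s)^(2*q)*s^2 + (δ+t)^(2*q)*t^2 - ((δ+s)^(2*q)+(δ+t)^(2*q))*w ∧
    (δ+s)^(2*q)*s^2 + (δ+t)^(2*q)*t^2 - ((δ+s)^(2*q)+(δ+t)^(2*q))*w ≤
      (1+hhC qlo qhi) * (((δ+s)^q)^2*s^2 + ((δ+t)^q)^2*t^2 - 2*((δ+s)^q*(δ+t)^q)*w) := by
  have hC0 := hhC_nonneg qlo qhi hqlo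
  set C := hhC qlo qhi with hCdef
  set G := (δ+s)^q with hG
  set H := (δ+t)^q with hH
  have hsq2 : (δ+s)^(2*q) = G^2 := hh_rpow_two (by linarith)
  have htq2 : (δ+t)^(2*q) = H^2 := hh_rpow_two (by linarith)
  have hG0 : 0 ≤ G := Real.rpow_nonneg (by linarith) q
  have hH0 : 0 ≤ H := Real.rpow_nonneg (by linarith) q
  set X := (δ+s)^(2*q)*s^2 + (δ+t)^(2*q)*t^2 - ((δ+s)^(2*q)+(δ+t)^(2*q))*w with hXdef
  set Y := G^2*s^2 + H^2*t^2 - 2*(G*H)*w with hYdef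
  set XL := (s-t)*(s*(δ+s)^(2*q) - t*(δ+t)^(2*q)) with hXLdef
  set YL := (s*G - t*H)^2 with hYLdef
  have hwst : w ≤ s*t := le_trans (le_abs_self w) hw
  have hXXL : X - XL = (G^2+H^2)*(s*t-w) := by rw [hXdef, hXLdef, hsq2, htq2]; ring
  have hYYL : Y - YL = 2*(G*H)*(s*t-w) := by rw [hYdef, hYLdef]; ring
  have hXL0 : 0 ≤ XL := by
    have h := hh_mono δ (2*q) t s hδ (by linarith) ht
    have h' := hh_mono δ (2*q) s t hδ (by linarith) hs
    rcases le_total t s with hts | hts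
    · exact mul_nonneg (by linarith) (by linarith [h hts])
    · have := h' hts
      rw [hXLdef]
      nlinarith
  have hYL0 : 0 ≤ YL := sq_nonneg _
  have hXgeXL : XL ≤ X := by nlinarith [mul_nonneg (by positivity : (0:ℝ) ≤ G^2+H^2) (by linarith : (0:ℝ) ≤ s*t-w)]
  have hYgeYL : YL ≤ Y := by nlinarith [mul_nonneg (mul_nonneg (by norm_num : (0:ℝ) ≤ 2) (mul_nonneg hG0 hH0)) (by linarith : (0:ℝ) ≤ s*t-w)]
  -- claims
  have hclaims : (G-H)^2*(s*t) ≤ C * XL ∧ (G-H)^2*(s*t) ≤ C * YL := by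
    rcases le_total t s with hts | hts
    · have h := hh_claims qlo qhi δ q s t hqlo hq1 hq2 hδ ht hts
      exact ⟨h.1, h.2⟩
    · have h := hh_claims qlo qhi δ q t s hqlo hq1 hq2 hδ hs hts
      constructor
      · have e1 : ((δ+t)^q - (δ+s)^q)^2*(t*s) = (G-H)^2*(s*t) := by rw [hG, hH]; ring
        have e2 : (t-s)*(t*(δ+t)^(2*q) - s*(δ+s)^(2*q)) = XL := by rw [hXLdef]; ring
        rw [e1, e2] at h
        exact h.1
      · have e1 : ((δ+t)^q - (δ+s)^q)^2*(t*s) = (G-H)^2*(s*t) := by rw [hG, hH]; ring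
        have e2 : (t*(δ+t)^q - s*(δ+s)^q)^2 = YL := by rw [hYLdef, hG, hH]; ring
        rw [e1, e2] at h
        exact h.2
  -- |Y - X| bound
  have hYX : Y - X = (G-H)^2 * w := by rw [hXdef, hYdef, hsq2, htq2]; ring
  have habs : |Y - X| ≤ (G-H)^2 * (s*t) := by
    rw [hYX, abs_mul, abs_of_nonneg (sq_nonneg (G-H))]
    exact mul_le_mul_of_nonneg_left hw (sq_nonneg _)
  have habs1 := abs_le.1 habs
  have hXY1 : Y ≤ (1+C) * X := by nlinarith [hclaims.1, habs1.2]
  have hXY2 : X ≤ (1+C) * Y := by nlinarith [hclaims.2, habs1.1]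
  constructor
  · rw [inv_mul_le_iff₀ (by linarith : (0:ℝ) < 1+C)]
    exact hXY1
  · exact hXY2

section MatrixLemmas
variable {d : ℕ}

lemma hh_finner_comm (A B : Matrix (Fin d) (Fin d) ℝ) : finner A B = finner B A := by
  unfold finner
  exact Finset.sum_congr rfl fun i _ => Finset.sum_congr rfl fun j _ => mul_comm _ _

lemma hh_sumsq (A : Matrix (Fin d) (Fin d) ℝ) : finner A A = ∑ i, ∑ j, (A i j)^2 := by
  unfold finner
  exact Finset.sum_congr rfl fun i _ => Finset.sum_congr rfl fun j _ => (pow_two _).symm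

lemma hh_frob_nonneg (A : Matrix (Fin d) (Fin d) ℝ) : 0 ≤ frob A := Real.sqrt_nonneg _

lemma hh_frob_sq (A : Matrix (Fin d) (Fin d) ℝ) : frob A ^ 2 = finner A A := by
  rw [frob, Real.sq_sqrt (by positivity), hh_sumsq]

lemma hh_msym_sub (A B : Matrix (Fin d) (Fin d) ℝ) : msym (A - B) = msym A - msym B := by
  unfold msym
  rw [Matrix.transpose_sub]
  ext i j
  simp [Matrix.sub_apply, Matrix.add_apply, Matrix.smul_apply]
  ring

lemma hh_msym_symm (A : Matrix (Fin d) (Fin d) ℝ) : (msym A).transpose = msym A := by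
  unfold msym
  rw [Matrix.transpose_smul, Matrix.transpose_add, Matrix.transpose_transpose, add_comm]

lemma hh_finner_msym_right (C M : Matrix (Fin d) (Fin d) ℝ) (hC : C.transpose = C) :
    finner C (msym M) = finner C M := by
  have key : (∑ i, ∑ j, C i j * M j i) = ∑ i, ∑ j, C i j * M i j := by
    rw [Finset.sum_comm]
    refine Finset.sum_congr rfl fun a _ => Finset.sum_congr rfl fun b _ => ?_
    have h2 : C b a = C a b := by
      have h3 := congrFun (congrFun hC a) b
      simpa [Matrix.transpose_apply] using h3
    rw [h2]
  unfold finner msym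
  have expand : ∀ i j, C i j * ((2:ℝ)⁻¹ • (M + M.transpose)) i j
      = 2⁻¹ * (C i j * M i j) + 2⁻¹ * (C i j * M j i) := by
    intro i j
    simp [Matrix.smul_apply, Matrix.add_apply, Matrix.transpose_apply]
    ring
  simp_rw [expand, Finset.sum_add_distrib, ← Finset.mul_sum]
  rw [key]
  ring

lemma hh_finner_sub_right (C A B : Matrix (Fin d) (Fin d) ℝ) :
    finner C (A - B) = finner C A - finner C B := by
  unfold finner
  simp_rw [Matrix.sub_apply, mul_sub, Finset.sum_sub_distrib]

lemma hh_finner_smul_sub_left (x y : ℝ) (a b M : Matrix (Fin d) (Fin d) ℝ) :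
    finner (x • a - y • b) M = x * finner a M - y * finner b M := by
  unfold finner
  simp_rw [Matrix.sub_apply, Matrix.smul_apply, smul_eq_mul, sub_mul, mul_assoc,
    Finset.sum_sub_distrib, ← Finset.mul_sum]

lemma hh_finner_smul_sub_right (x y : ℝ) (M a b : Matrix (Fin d) (Fin d) ℝ) :
    finner M (x • a - y • b) = x * finner M a - y * finner M b := by
  unfold finner
  have e : ∀ (i j : Fin d), M i j * ((x • a - y • b) i j)
      = x*(M i j * a i j) - y*(M i j * b i j) := by
    intro i j
    simp [Matrix.sub_apply, Matrix.smul_apply]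
    ring
  simp_rw [e, Finset.sum_sub_distrib, ← Finset.mul_sum]

lemma hh_cs (a b : Matrix (Fin d) (Fin d) ℝ) : |finner a b| ≤ frob a * frob b := by
  have h : (finner a b)^2 ≤ finner a a * finner b b := by
    have h2 := Finset.sum_mul_sq_le_sq_mul_sq Finset.univ
      (fun p : Fin d × Fin d => a p.1 p.2) (fun p : Fin d × Fin d => b p.1 p.2)
    rw [hh_sumsq, hh_sumsq]
    unfold finner
    rw [← Fintype.sum_prod_type', ← Fintype.sum_prod_type', ← Fintype.sum_prod_type']
    exact h2
  rw [← Real.sqrt_sq_eq_abs, frob, frob, ← Real.sqrt_mul (by positivity)]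
  apply Real.sqrt_le_sqrt
  rw [← hh_sumsq, ← hh_sumsq]
  exact h

end MatrixLemmas

theorem stmt4 (d : ℕ) (hd : 1 ≤ d) (δ pm pp : ℝ) (hδ : 0 ≤ δ) (hpm : 1 < pm)
    (hpmpp : pm ≤ pp) :
    ∃ c : ℝ, 1 ≤ c ∧ ∀ p : ℝ, pm ≤ p → p ≤ pp → ∀ A B : Matrix (Fin d) (Fin d) ℝ,
      c⁻¹ * frob (Fmap δ p A - Fmap δ p B) ^ 2 ≤
          finner (Smap δ p A - Smap δ p B) (A - B) ∧
      finner (Smap δ p A - Smap δ p B) (A - B) ≤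
          c * frob (Fmap δ p A - Fmap δ p B) ^ 2 := by
  set qlo := (pm - 2)/2 with hqlo_def
  set qhi := (pp - 2)/2 with hqhi_def
  have hqlo : -(1/2) < qlo := by rw [hqlo_def]; linarith
  refine ⟨1 + hhC qlo qhi, by linarith [hhC_nonneg qlo qhi hqlo], ?_⟩
  intro p hp1 hp2 A B
  set q := (p - 2)/2 with hq_def
  have hq1 : qlo ≤ q := by rw [hq_def, hqlo_def]; linarith
  have hq2 : q ≤ qhi := by rw [hq_def, hqhi_def]; linarith
  set a := msym A with ha_def
  set b := msym B with hb_def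
  set s := frob a with hs_def
  set t := frob b with ht_def
  set w := finner a b with hw_def
  have hs : 0 ≤ s := hh_frob_nonneg a
  have ht : 0 ≤ t := hh_frob_nonneg b
  have hw : |w| ≤ s*t := hh_cs a b
  have hp2q : p - 2 = 2*q := by rw [hq_def]; ring
  have hpq : (p - 2)/2 = q := by rw [hq_def]
  -- rewrite Smap/Fmap differences
  have hS : Smap δ p A - Smap δ p B = ((δ+s)^(2*q)) • a - ((δ+t)^(2*q)) • b := by
    unfold Smap
    rw [hp2q, ← ha_def, ← hb_def, ← hs_def, ← ht_def]
  have hF : Fmap δ p A - Fmap δ p B = ((δ+s)^q) • a - ((δ+t)^q) • b := by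
    unfold Fmap
    rw [hpq, ← ha_def, ← hb_def, ← hs_def, ← ht_def]
  have hsymm : ∀ (x y : ℝ), (x • a - y • b).transpose = x • a - y • b := by
    intro x y
    rw [Matrix.transpose_sub, Matrix.transpose_smul, Matrix.transpose_smul,
      ha_def, hb_def, hh_msym_symm, hh_msym_symm]
  have hfaa : finner a a = s^2 := by rw [hs_def, hh_frob_sq]
  have hfbb : finner b b = t^2 := by rw [ht_def, hh_frob_sq]
  have hfba : finner b a = w := by rw [hw_def, hh_finner_comm]
  -- E1
  have E1 : finner (Smap δ p A - Smap δ p B) (A - B)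
      = (δ+s)^(2*q)*s^2 + (δ+t)^(2*q)*t^2 - ((δ+s)^(2*q)+(δ+t)^(2*q))*w := by
    rw [hS, ← hh_finner_msym_right _ _ (hsymm _ _), hh_msym_sub, ← ha_def, ← hb_def,
      hh_finner_sub_right, hh_finner_smul_sub_left, hh_finner_smul_sub_left,
      hfaa, hfbb, hfba, ← hw_def]
    ring
  -- E2
  have E2 : frob (Fmap δ p A - Fmap δ p B) ^ 2
      = ((δ+s)^q)^2*s^2 + ((δ+t)^q)^2*t^2 - 2*((δ+s)^q*(δ+t)^q)*w := by
    rw [hF, hh_frob_sq, hh_finner_smul_sub_left, hh_finner_smul_sub_right,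
      hh_finner_smul_sub_right, hfaa, hfbb, hfba, ← hw_def]
    ring
  rw [E1, E2]
  exact hh_main qlo qhi δ q s t w hqlo hq1 hq2 hδ hs ht hw
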